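/- Let w > 2 and let F(w) := {z ∈ ℂ : Im z > 0, |Re z| < w/2, |z| > 1}. Then F(w) is a fundamental domain for the action of the Hecke triangle group Γ_w on the upper half-plane ℍ in the following sense: (i) for every z ∈ ℍ there exists γ ∈ Γ_w such that γ • z lies in the closure of F(w) (taken inside ℍ); and (ii) if z, z' ∈ F(w) and γ ∈ Γ_w satisfy γ • z = z', then z = z'. -/

import Mathlib

open MeasureTheory

/-- `S = [[0,1],[-1,0]]` as an element of `SL(2,ℝ)`. -/
noncomputable def S : Matrix.SpecialLinearGroup (Fin 2) ℝ :=
  ⟨!![0, 1; -1, 0], by norm_num [Matrix.det_fin_two_of]⟩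

/-- `T_w = [[1,w],[0,1]]` as an element of `SL(2,ℝ)`. -/
noncomputable def T (w : ℝ) : Matrix.SpecialLinearGroup (Fin 2) ℝ :=
  ⟨!![1, w; 0, 1], by norm_num [Matrix.det_fin_two_of]⟩

/-- The Hecke triangle group `Γ_w`, the subgroup of `SL(2,ℝ)` generated by `S` and `T_w`. -/
noncomputable def heckeGroup (w : ℝ) : Subgroup (Matrix.SpecialLinearGroup (Fin 2) ℝ) :=
  Subgroup.closure {S, T w}

/-- The Möbius action of an element of `SL(2,ℝ)` on `ℂ`. -/
noncomputable def moebius (γ : Matrix.SpecialLinearGroup (Fin 2) ℝ) (z : ℂ) : ℂ :=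
  (((γ : Matrix (Fin 2) (Fin 2) ℝ) 0 0 : ℝ) * z + ((γ : Matrix (Fin 2) (Fin 2) ℝ) 0 1 : ℝ)) /
    (((γ : Matrix (Fin 2) (Fin 2) ℝ) 1 0 : ℝ) * z + ((γ : Matrix (Fin 2) (Fin 2) ℝ) 1 1 : ℝ))

/-! ### Basic lemmas about `moebius` -/

open UpperHalfPlane in
lemma moebius_coe (γ : Matrix.SpecialLinearGroup (Fin 2) ℝ) (z : ℍ) :
    moebius γ (z : ℂ) = ((γ • z : ℍ) : ℂ) := by
  rw [UpperHalfPlane.specialLinearGroup_apply]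
  simp [moebius]

lemma moebius_im_pos (γ : Matrix.SpecialLinearGroup (Fin 2) ℝ) {z : ℂ} (hz : 0 < z.im) :
    0 < (moebius γ z).im := by
  have h : moebius γ z = ((γ • (UpperHalfPlane.mk z hz) : UpperHalfPlane) : ℂ) :=
    moebius_coe γ (UpperHalfPlane.mk z hz)
  rw [h]
  exact (γ • (UpperHalfPlane.mk z hz)).2

lemma moebius_mul (γ₁ γ₂ : Matrix.SpecialLinearGroup (Fin 2) ℝ) {z : ℂ} (hz : 0 < z.im) :
    moebius (γ₁ * γ₂) z = moebius γ₁ (moebius γ₂ z) := by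
  have h2 : moebius γ₂ z = ((γ₂ • (UpperHalfPlane.mk z hz) : UpperHalfPlane) : ℂ) :=
    moebius_coe γ₂ (UpperHalfPlane.mk z hz)
  have h12 : moebius (γ₁ * γ₂) z
      = (((γ₁ * γ₂) • (UpperHalfPlane.mk z hz) : UpperHalfPlane) : ℂ) :=
    moebius_coe (γ₁ * γ₂) (UpperHalfPlane.mk z hz)
  have h1 := moebius_coe γ₁ (γ₂ • UpperHalfPlane.mk z hz)
  rw [h12, h2, h1, mul_smul]

lemma moebius_one (z : ℂ) : moebius 1 z = z := by
  simp [moebius, Matrix.SpecialLinearGroup.coe_one]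

lemma moebius_neg (γ : Matrix.SpecialLinearGroup (Fin 2) ℝ) (z : ℂ) :
    moebius (-γ) z = moebius γ z := by
  simp only [moebius, Matrix.SpecialLinearGroup.coe_neg, Matrix.neg_apply, Complex.ofReal_neg,
    neg_mul]
  rw [← neg_add, ← neg_add, neg_div_neg_eq]

lemma moebius_T (u : ℝ) (z : ℂ) : moebius (T u) z = z + u := by
  simp [moebius, T]

lemma moebius_S (z : ℂ) : moebius S z = -z⁻¹ := by
  simp [moebius, S]

lemma T_mul (u v : ℝ) : T u * T v = T (u + v) := by
  apply Subtype.ext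
  show (T u : Matrix (Fin 2) (Fin 2) ℝ) * (T v : Matrix (Fin 2) (Fin 2) ℝ) = _
  rw [show (T u : Matrix (Fin 2) (Fin 2) ℝ) = !![1, u; 0, 1] from rfl,
    show (T v : Matrix (Fin 2) (Fin 2) ℝ) = !![1, v; 0, 1] from rfl,
    show (T (u+v) : Matrix (Fin 2) (Fin 2) ℝ) = !![1, u+v; 0, 1] from rfl,
    Matrix.mul_fin_two]
  norm_num [add_comm]

lemma S_mul_S : S * S = -1 := by
  apply Subtype.ext
  show (S : Matrix (Fin 2) (Fin 2) ℝ) * (S : Matrix (Fin 2) (Fin 2) ℝ) = _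
  rw [show (S : Matrix (Fin 2) (Fin 2) ℝ) = !![0, 1; -1, 0] from rfl, Matrix.mul_fin_two,
    show ((-1 : Matrix.SpecialLinearGroup (Fin 2) ℝ) : Matrix (Fin 2) (Fin 2) ℝ) = -1 by simp]
  norm_num [Matrix.one_fin_two]
  ext i j
  fin_cases i <;> fin_cases j <;> simp [Matrix.one_fin_two]

lemma S_inv : S⁻¹ = -S := by
  apply inv_eq_of_mul_eq_one_right
  rw [mul_neg, S_mul_S, neg_neg]

lemma T_zero : T 0 = 1 := by
  apply Subtype.ext
  show (!![1, (0:ℝ); 0, 1] : Matrix (Fin 2) (Fin 2) ℝ) = _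
  simp [Matrix.one_fin_two]

lemma T_zpow (w : ℝ) : ∀ m : ℤ, (T w) ^ m = T (m * w) := by
  have key : ∀ n : ℕ, (T w) ^ n = T (n * w) := by
    intro n
    induction n with
    | zero => simpa using T_zero.symm
    | succ n ih => rw [pow_succ, ih, T_mul]; norm_num; ring_nf
  intro m
  rcases m with n | n
  · simpa using key n
  · rw [zpow_negSucc, key]
    rw [inv_eq_iff_mul_eq_one, T_mul]
    rw [show ((n+1:ℕ) * w + (Int.negSucc n) * w) = 0 by push_cast; ring, T_zero]

lemma moebius_T_zpow (w : ℝ) (m : ℤ) (z : ℂ) :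
    moebius ((T w) ^ m) z = z + ((m : ℝ) * w : ℝ) := by
  rw [T_zpow, moebius_T]

/-! ### Membership lemmas -/

lemma S_mem (w : ℝ) : S ∈ heckeGroup w :=
  Subgroup.subset_closure (Set.mem_insert _ _)

lemma T_mem (w : ℝ) : T w ∈ heckeGroup w :=
  Subgroup.subset_closure (Set.mem_insert_of_mem _ rfl)

lemma T_zpow_mem (w : ℝ) (m : ℤ) : (T w) ^ m ∈ heckeGroup w :=
  zpow_mem (T_mem w) m

/-! ### The rounding step -/

lemma round_bound {w : ℝ} (hw0 : 0 < w) (x : ℝ) :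
    |x + ((-round (x / w) : ℤ) : ℝ) * w| ≤ w / 2 := by
  have h : x + ((-round (x / w) : ℤ) : ℝ) * w = (x / w - round (x / w)) * w := by
    push_cast
    field_simp
    ring
  rw [h, abs_mul, abs_of_pos hw0]
  have := abs_sub_round (x / w)
  nlinarith

/-! ### Membership in the closure of `F` -/

lemma mem_closure_F {w : ℝ} (hw : 2 < w) {ζ : ℂ}
    (h1 : 0 < ζ.im) (h2 : |ζ.re| ≤ w / 2) (h3 : 1 ≤ ‖ζ‖) :
    ζ ∈ closure {z : ℂ | 0 < z.im ∧ |z.re| < w / 2 ∧ 1 < ‖z‖} := by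
  rw [Metric.mem_closure_iff]
  intro ε hε
  set δ : ℝ := (ζ.re ^ 2 + 1) / ζ.im with hδ
  have hδ0 : 0 < δ := div_pos (by positivity) h1
  set c : ℂ := Complex.I * (ζ.im + δ : ℝ) - ζ with hc
  set t : ℝ := min (ε / (2 * (‖c‖ + 1))) (1 / 2) with ht
  have habsc : (0:ℝ) < ‖c‖ + 1 := by positivity
  have ht0 : 0 < t := by
    apply lt_min
    · positivity
    · norm_num
  have ht1 : t < 1 := lt_of_le_of_lt (min_le_right _ _) (by norm_num)
  refine ⟨ζ + (t : ℂ) * c, ?_, ?_⟩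
  · have hre : (ζ + (t : ℂ) * c).re = (1 - t) * ζ.re := by
      simp [hc, Complex.add_re, Complex.mul_re]
      try ring
    have him : (ζ + (t : ℂ) * c).im = ζ.im + t * δ := by
      simp [hc, Complex.add_im, Complex.mul_im]
      try ring
    have hnormζ : 1 ≤ ζ.re ^ 2 + ζ.im ^ 2 := by
      have := Complex.sq_norm ζ
      rw [Complex.normSq_apply] at this
      nlinarith
    refine ⟨?_, ?_, ?_⟩
    · rw [him]; positivity
    · rw [hre, abs_mul, abs_of_pos (by linarith : (0:ℝ) < 1 - t)]
      have hw2 : (0:ℝ) < w / 2 := by linarith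
      nlinarith [abs_nonneg ζ.re]
    · have hsq : 1 < (ζ + (t : ℂ) * c).re ^ 2 + (ζ + (t : ℂ) * c).im ^ 2 := by
        rw [hre, him]
        have hδim : δ * ζ.im - ζ.re ^ 2 = 1 := by
          rw [hδ]; field_simp; ring
        have hkey : ((1 - t) * ζ.re) ^ 2 + (ζ.im + t * δ) ^ 2
            = ζ.re ^ 2 + ζ.im ^ 2 + 2 * t * (δ * ζ.im - ζ.re ^ 2)
              + t ^ 2 * (ζ.re ^ 2 + δ ^ 2) := by ring
        rw [hkey, hδim]
        nlinarith [mul_nonneg (sq_nonneg t) (by positivity : (0:ℝ) ≤ ζ.re ^ 2 + δ ^ 2)]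
      have := Complex.sq_norm (ζ + (t : ℂ) * c)
      rw [Complex.normSq_apply] at this
      nlinarith [norm_nonneg (ζ + (t : ℂ) * c)]
  · rw [Complex.dist_eq]
    have : ζ - (ζ + (t : ℂ) * c) = -((t:ℂ) * c) := by ring
    rw [this, norm_neg, norm_mul, Complex.norm_real, Real.norm_eq_abs, abs_of_pos ht0]
    have hcc : ‖c‖ ≤ ‖c‖ + 1 := by linarith
    calc t * ‖c‖ ≤ (ε / (2 * (‖c‖ + 1))) * ‖c‖ := by
          apply mul_le_mul_of_nonneg_right (min_le_left _ _) (norm_nonneg c)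
      _ < ε := by
          rw [div_mul_eq_mul_div, div_lt_iff₀ (by positivity)]
          nlinarith [norm_nonneg c]

/-! ### Normal forms in the Hecke group (ping-pong) -/

inductive HeckeState
  | e : HeckeState
  | s : HeckeState
  | t : HeckeState
deriving DecidableEq

/-- Normal form predicate: `HW w γ st` means `γ` is (up to sign) a reduced alternating word
in `S` and nonzero powers of `T w`, whose leftmost letter type is recorded by `st`. -/
inductive HW (w : ℝ) : Matrix.SpecialLinearGroup (Fin 2) ℝ → HeckeState → Prop
  | one : HW w 1 HeckeState.e
  | neg {γ st} : HW w γ st → HW w (-γ) st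
  | scons {γ st'} (h : HW w γ st') (hst : st' ≠ HeckeState.s) : HW w (S * γ) HeckeState.s
  | tcons {γ st'} (m : ℤ) (hm : m ≠ 0) (h : HW w γ st') (hst : st' ≠ HeckeState.t) :
      HW w ((T w) ^ m * γ) HeckeState.t

lemma HW_mul_left {w : ℝ} {γ : Matrix.SpecialLinearGroup (Fin 2) ℝ} {st : HeckeState}
    (h : HW w γ st) :
    (∀ k : ℤ, k ≠ 0 → ∃ st', HW w ((T w) ^ k * γ) st') ∧ (∃ st', HW w (S * γ) st') := by
  induction h with
  | one =>
    constructor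
    · intro k hk
      exact ⟨HeckeState.t, HW.tcons k hk HW.one (by simp)⟩
    · exact ⟨HeckeState.s, HW.scons HW.one (by simp)⟩
  | neg h ih =>
    constructor
    · intro k hk
      obtain ⟨st', h'⟩ := ih.1 k hk
      exact ⟨st', by rw [mul_neg]; exact HW.neg h'⟩
    · obtain ⟨st', h'⟩ := ih.2
      exact ⟨st', by rw [mul_neg]; exact HW.neg h'⟩
  | @scons γ' st' h hst ih =>
    constructor
    · intro k hk
      exact ⟨HeckeState.t, HW.tcons k hk (HW.scons h hst) (by simp)⟩
    · refine ⟨st', ?_⟩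
      rw [← mul_assoc, S_mul_S, neg_one_mul]
      exact HW.neg h
  | @tcons γ' st' m hm h hst ih =>
    constructor
    · intro k hk
      rw [← mul_assoc, ← zpow_add]
      by_cases hkm : k + m = 0
      · rw [hkm, zpow_zero, one_mul]
        exact ⟨st', h⟩
      · exact ⟨HeckeState.t, HW.tcons _ hkm h hst⟩
    · exact ⟨HeckeState.s, HW.scons (HW.tcons m hm h hst) (by simp)⟩

lemma hecke_HW {w : ℝ} {γ : Matrix.SpecialLinearGroup (Fin 2) ℝ} (hγ : γ ∈ heckeGroup w) :
    ∃ st, HW w γ st := by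
  have hγ' : γ ∈ Subgroup.closure ({S, T w} : Set (Matrix.SpecialLinearGroup (Fin 2) ℝ)) := hγ
  induction hγ' using Subgroup.closure_induction_left with
  | one => exact ⟨HeckeState.e, HW.one⟩
  | mul_left x hx y hy ih =>
    obtain ⟨st, h⟩ := ih hy
    rcases hx with hx | hx
    · subst hx
      exact (HW_mul_left h).2
    · rw [Set.mem_singleton_iff] at hx
      subst hx
      obtain ⟨st', h'⟩ := (HW_mul_left h).1 1 one_ne_zero
      rw [zpow_one] at h'
      exact ⟨st', h'⟩
  | inv_mul_cancel x hx y hy ih =>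
    obtain ⟨st, h⟩ := ih hy
    rcases hx with hx | hx
    · subst hx
      rw [S_inv, neg_mul]
      obtain ⟨st', h'⟩ := (HW_mul_left h).2
      exact ⟨st', HW.neg h'⟩
    · rw [Set.mem_singleton_iff] at hx
      subst hx
      obtain ⟨st', h'⟩ := (HW_mul_left h).1 (-1) (by norm_num)
      rw [zpow_neg_one] at h'
      exact ⟨st', h'⟩

lemma HW_dyn {w : ℝ} (hw : 2 < w) {γ : Matrix.SpecialLinearGroup (Fin 2) ℝ} {st : HeckeState}
    (h : HW w γ st) :
    ∀ z : ℂ, 0 < z.im → |z.re| < w / 2 → 1 < ‖z‖ →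
      0 < (moebius γ z).im ∧
      (st = HeckeState.e → moebius γ z = z) ∧
      (st = HeckeState.s → ‖moebius γ z‖ < 1) ∧
      (st = HeckeState.t → w / 2 < |(moebius γ z).re|) := by
  induction h with
  | one =>
    intro z hz hre habs
    rw [moebius_one]
    refine ⟨hz, fun _ => rfl, ?_, ?_⟩ <;> exact fun h => absurd h (by decide)
  | neg h ih =>
    intro z hz hre habs
    rw [moebius_neg]
    exact ih z hz hre habs
  | @scons γ' st' h hst ih =>
    intro z hz hre habs
    obtain ⟨him, he, hs, ht⟩ := ih z hz hre habs
    set ζ := moebius γ' z with hζ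
    have habsζ : 1 < ‖ζ‖ := by
      cases st' with
      | e => rw [he rfl]; exact habs
      | s => exact absurd rfl hst
      | t =>
        have := ht rfl
        calc (1:ℝ) < w / 2 := by linarith
          _ < |ζ.re| := this
          _ ≤ ‖ζ‖ := Complex.abs_re_le_norm ζ
    have hζ0 : ζ ≠ 0 := by
      intro h0
      rw [h0] at habsζ
      simp at habsζ
      linarith
    have hmul : moebius (S * γ') z = -ζ⁻¹ := by
      rw [moebius_mul S γ' hz, ← hζ, moebius_S]
    rw [hmul]
    have habs' : ‖-ζ⁻¹‖ = (‖ζ‖)⁻¹ := by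
      rw [norm_neg, norm_inv]
    have him' : (-ζ⁻¹).im = ζ.im / Complex.normSq ζ := by
      rw [Complex.neg_im, Complex.inv_im, neg_div, neg_neg]
    refine ⟨?_, ?_, ?_, ?_⟩
    · rw [him']
      exact div_pos him (Complex.normSq_pos.mpr hζ0)
    · exact fun h => absurd h (by decide)
    · intro _
      rw [habs', inv_lt_one_iff₀]
      right; exact habsζ
    · exact fun h => absurd h (by decide)
  | @tcons γ' st' m hm h hst ih =>
    intro z hz hre habs
    obtain ⟨him, he, hs, ht⟩ := ih z hz hre habs
    set ζ := moebius γ' z with hζ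
    have hreζ : |ζ.re| < w / 2 := by
      cases st' with
      | e => rw [he rfl]; exact hre
      | s =>
        have := hs rfl
        calc |ζ.re| ≤ ‖ζ‖ := Complex.abs_re_le_norm ζ
          _ < 1 := this
          _ < w / 2 := by linarith
      | t => exact absurd rfl hst
    have hmul : moebius ((T w) ^ m * γ') z = ζ + ((m : ℝ) * w : ℝ) := by
      rw [moebius_mul _ γ' hz, ← hζ, moebius_T_zpow]
    rw [hmul]
    have hm1 : (1:ℝ) ≤ |(m:ℝ)| := by
      rw [← Int.cast_abs]
      exact_mod_cast Int.one_le_abs hm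
    have hw0 : (0:ℝ) < w := by linarith
    have hmw : w ≤ |(m:ℝ) * w| := by
      rw [abs_mul, abs_of_pos hw0]
      nlinarith
    refine ⟨?_, ?_, ?_, ?_⟩
    · simp only [Complex.add_im, Complex.ofReal_im, add_zero]
      exact him
    · exact fun h => absurd h (by decide)
    · exact fun h => absurd h (by decide)
    · intro _
      have hrecomp : (ζ + (((m : ℝ) * w : ℝ) : ℂ)).re = ζ.re + (m:ℝ) * w := by
        simp
      rw [hrecomp]
      have h1 : |(m:ℝ) * w| ≤ |ζ.re + (m:ℝ) * w| + |ζ.re| := by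
        have := abs_add_le (ζ.re + (m:ℝ) * w) (-ζ.re)
        simp at this
        calc |(m:ℝ) * w| = |ζ.re + (m:ℝ) * w + -ζ.re| := by ring_nf
          _ ≤ |ζ.re + (m:ℝ) * w| + |(-ζ.re)| := abs_add_le _ _
          _ = |ζ.re + (m:ℝ) * w| + |ζ.re| := by rw [abs_neg]
      linarith

/-! ### The reduction algorithm (existence part) -/

lemma translate_exists {w : ℝ} (hw0 : 0 < w) (z : ℂ) :
    ∃ m : ℤ, |(z + (((m : ℝ) * w : ℝ) : ℂ)).re| ≤ w / 2 :=
  ⟨-round (z.re / w), by simpa using round_bound hw0 z.re⟩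

lemma reduce {w : ℝ} (hw : 2 < w) :
    ∀ n : ℕ, ∀ z : ℂ, 0 < z.im → (2 / w) ^ n ≤ z.im →
      ∃ γ ∈ heckeGroup w, 0 < (moebius γ z).im ∧ |(moebius γ z).re| ≤ w / 2 ∧
        1 ≤ ‖moebius γ z‖ := by
  have hw0 : (0:ℝ) < w := by linarith
  intro n
  induction n with
  | zero =>
    intro z hz h1
    rw [pow_zero] at h1
    obtain ⟨m, hre1⟩ := translate_exists hw0 z
    refine ⟨T w ^ m, T_zpow_mem w m, ?_⟩
    rw [moebius_T_zpow]
    have him : (z + (((m:ℝ) * w : ℝ) : ℂ)).im = z.im := by simp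
    refine ⟨by rw [him]; exact hz, hre1, ?_⟩
    calc (1:ℝ) ≤ z.im := h1
      _ = (z + (((m:ℝ) * w : ℝ) : ℂ)).im := him.symm
      _ ≤ |(z + (((m:ℝ) * w : ℝ) : ℂ)).im| := le_abs_self _
      _ ≤ ‖_‖ := Complex.abs_im_le_norm _
  | succ n ih =>
    intro z hz hn
    obtain ⟨m, hre1⟩ := translate_exists hw0 z
    set z₁ : ℂ := z + (((m:ℝ) * w : ℝ) : ℂ) with hz₁def
    have him1 : z₁.im = z.im := by rw [hz₁def]; simp
    have hz₁im : 0 < z₁.im := by rw [him1]; exact hz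
    have hmoeb1 : moebius (T w ^ m) z = z₁ := moebius_T_zpow w m z
    by_cases hcase : 1 ≤ ‖z₁‖
    · refine ⟨T w ^ m, T_zpow_mem w m, ?_⟩
      rw [hmoeb1]
      exact ⟨hz₁im, hre1, hcase⟩
    · push_neg at hcase
      have hz₁ne : z₁ ≠ 0 := by
        intro h
        rw [h] at hz₁im
        simp at hz₁im
      set z₂ : ℂ := -z₁⁻¹ with hz₂def
      have hmoeb2 : moebius (S * T w ^ m) z = z₂ := by
        rw [moebius_mul S _ hz, hmoeb1, moebius_S]
      have him2 : z₂.im = z₁.im / Complex.normSq z₁ := by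
        rw [hz₂def, Complex.neg_im, Complex.inv_im, neg_div, neg_neg]
      have hz₂im : 0 < z₂.im := by
        rw [him2]
        exact div_pos hz₁im (Complex.normSq_pos.mpr hz₁ne)
      have habs1pos : 0 < ‖z₁‖ := norm_pos_iff.mpr hz₁ne
      have hprod : ‖z₁‖ * ‖z₂‖ = 1 := by
        rw [hz₂def, norm_neg, norm_inv, mul_inv_cancel₀ (ne_of_gt habs1pos)]
      have habs2' : 1 < ‖z₂‖ := by
        nlinarith [norm_nonneg z₂]
      obtain ⟨m₂, hre3⟩ := translate_exists hw0 z₂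
      set z₃ : ℂ := z₂ + (((m₂:ℝ) * w : ℝ) : ℂ) with hz₃def
      have him3 : z₃.im = z₂.im := by rw [hz₃def]; simp
      have hz₃im : 0 < z₃.im := by rw [him3]; exact hz₂im
      have hmoeb3 : moebius (T w ^ m₂ * (S * T w ^ m)) z = z₃ := by
        rw [moebius_mul _ _ hz, hmoeb2, moebius_T_zpow]
      by_cases hcase2 : 1 ≤ ‖z₃‖
      · refine ⟨T w ^ m₂ * (S * T w ^ m),
          mul_mem (T_zpow_mem w m₂) (mul_mem (S_mem w) (T_zpow_mem w m)), ?_⟩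
        rw [hmoeb3]
        exact ⟨hz₃im, hre3, hcase2⟩
      · push_neg at hcase2
        have hm₂ne : m₂ ≠ 0 := by
          intro h
          rw [h] at hz₃def
          norm_num at hz₃def
          rw [hz₃def] at hcase2
          linarith
        have hm1 : (1:ℝ) ≤ |(m₂:ℝ)| := by
          rw [← Int.cast_abs]
          exact_mod_cast Int.one_le_abs hm₂ne
        have hmw : w ≤ |(m₂:ℝ) * w| := by
          rw [abs_mul, abs_of_pos hw0]
          nlinarith
        have hre3' : z₃.re = z₂.re + (m₂:ℝ) * w := by rw [hz₃def]; simp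
        have hrez₂ : w / 2 ≤ |z₂.re| := by
          have h1 : |(m₂:ℝ) * w| ≤ |z₂.re + (m₂:ℝ) * w| + |z₂.re| := by
            calc |(m₂:ℝ) * w| = |z₂.re + (m₂:ℝ) * w + -z₂.re| := by ring_nf
              _ ≤ |z₂.re + (m₂:ℝ) * w| + |(-z₂.re)| := abs_add_le _ _
              _ = |z₂.re + (m₂:ℝ) * w| + |z₂.re| := by rw [abs_neg]
          rw [hre3'] at hre3
          linarith
        have habsz₂ : w / 2 ≤ ‖z₂‖ :=
          le_trans hrez₂ (Complex.abs_re_le_norm z₂)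
        have habsz₁ : ‖z₁‖ ≤ 2 / w := by
          rw [le_div_iff₀ hw0]
          nlinarith [mul_le_mul_of_nonneg_left habsz₂ (norm_nonneg z₁)]
        have hnormsq : Complex.normSq z₁ ≤ (2/w)^2 := by
          rw [← Complex.sq_norm]
          nlinarith [norm_nonneg z₁]
        have h2w : (0:ℝ) < 2 / w := by positivity
        have hns : 0 < Complex.normSq z₁ := Complex.normSq_pos.mpr hz₁ne
        have him3' : (2/w)^n ≤ z₃.im := by
          rw [him3, him2, him1, le_div_iff₀ hns]
          calc (2/w)^n * Complex.normSq z₁ ≤ (2/w)^n * (2/w)^2 :=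
                mul_le_mul_of_nonneg_left hnormsq (le_of_lt (pow_pos h2w n))
            _ = (2/w)^(n+1) * (2/w) := by ring
            _ ≤ (2/w)^(n+1) * 1 :=
                mul_le_mul_of_nonneg_left ((div_le_one hw0).mpr (by linarith))
                  (le_of_lt (pow_pos h2w (n+1)))
            _ = (2/w)^(n+1) := mul_one _
            _ ≤ z.im := hn
        obtain ⟨γ', hγ'mem, hγ'⟩ := ih z₃ hz₃im him3'
        refine ⟨γ' * (T w ^ m₂ * (S * T w ^ m)),
          mul_mem hγ'mem (mul_mem (T_zpow_mem w m₂) (mul_mem (S_mem w) (T_zpow_mem w m))), ?_⟩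
        rw [moebius_mul _ _ hz, hmoeb3]
        exact hγ'

theorem fundamental_domain_hecke (w : ℝ) (hw : 2 < w)
    (F : Set ℂ) (hF : F = {z : ℂ | 0 < z.im ∧ |z.re| < w / 2 ∧ 1 < ‖z‖}) :
    (∀ z : ℂ, 0 < z.im →
      ∃ γ ∈ heckeGroup w, moebius γ z ∈ closure F ∧ 0 < (moebius γ z).im) ∧
    (∀ z ∈ F, ∀ z' ∈ F, ∀ γ ∈ heckeGroup w, moebius γ z = z' → z = z') := by
  have hw0 : (0:ℝ) < w := by linarith
  constructor
  · intro z hz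
    obtain ⟨n, hn⟩ := exists_pow_lt_of_lt_one hz (by rw [div_lt_one hw0]; linarith : 2 / w < 1)
    obtain ⟨γ, hγmem, him, hre, habs⟩ := reduce hw n z hz (le_of_lt hn)
    exact ⟨γ, hγmem, hF ▸ mem_closure_F hw him hre habs, him⟩
  · intro z hz z' hz' γ hγmem heq
    rw [hF] at hz hz'
    obtain ⟨h1, h2, h3⟩ := hz
    obtain ⟨h1', h2', h3'⟩ := hz'
    obtain ⟨st, hW⟩ := hecke_HW hγmem
    obtain ⟨him, he, hs, ht⟩ := HW_dyn hw hW z h1 h2 h3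
    cases st with
    | e => rw [he rfl] at heq; exact heq
    | s =>
      rw [heq] at hs
      linarith [hs rfl]
    | t =>
      rw [heq] at ht
      linarith [ht rfl]
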